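/- Let g>0, H>0, Q > 2√(gH³), and let h₁,h₂ ∈ (0,H] with h₁ ≠ h₂. Define Q₁ = ( −Q h₁² + h₁ h₂ √(Q² + 2g(h₂²−h₁²)(h₂−h₁)) ) / (h₂²−h₁²) and λ = Q₁²/(2h₁²) + g h₁. Then 0 ≤ Q₁ ≤ Q, λ ≥ g·max(h₁,h₂), and the pair (λ,Q₁) satisfies Q₁ = h₁√(2λ−2g h₁) and Q−Q₁ = h₂√(2λ−2g h₂). -/

import Mathlib

set_option maxHeartbeats 1000000


/-- For `g, H > 0`, `Q > 2√(gH³)` and distinct heights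
`h₁, h₂ ∈ (0,H]`, the explicit value
`Q₁ = (−Q h₁² + h₁h₂ √(Q² + 2g(h₂²−h₁²)(h₂−h₁))) / (h₂²−h₁²)` together with
`λ = Q₁²/(2h₁²) + g h₁` satisfies `0 ≤ Q₁ ≤ Q`, `λ ≥ g·max(h₁,h₂)`,
`Q₁ = h₁√(2λ−2gh₁)` and `Q − Q₁ = h₂√(2λ−2gh₂)`. -/
theorem impinging_jet_explicit_flux_formula
    (g H Q h₁ h₂ Q₁ lam : ℝ) (hg : 0 < g) (hH : 0 < H)
    (hQ : Q > 2 * Real.sqrt (g * H ^ 3))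
    (hh₁ : h₁ ∈ Set.Ioc 0 H) (hh₂ : h₂ ∈ Set.Ioc 0 H) (hne : h₁ ≠ h₂)
    (hQ₁ : Q₁ = (-(Q * h₁ ^ 2) + h₁ * h₂ *
        Real.sqrt (Q ^ 2 + 2 * g * (h₂ ^ 2 - h₁ ^ 2) * (h₂ - h₁))) / (h₂ ^ 2 - h₁ ^ 2))
    (hlam : lam = Q₁ ^ 2 / (2 * h₁ ^ 2) + g * h₁) :
    0 ≤ Q₁ ∧ Q₁ ≤ Q ∧ g * max h₁ h₂ ≤ lam ∧
      Q₁ = h₁ * Real.sqrt (2 * lam - 2 * g * h₁) ∧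
      Q - Q₁ = h₂ * Real.sqrt (2 * lam - 2 * g * h₂) := by
  obtain ⟨h1pos, h1le⟩ := hh₁
  obtain ⟨h2pos, h2le⟩ := hh₂
  have h1ne : h₁ ≠ 0 := h1pos.ne'
  have h2ne : h₂ ≠ 0 := h2pos.ne'
  have hQpos : 0 < Q := lt_of_le_of_lt (by positivity) hQ
  have hgH : (0:ℝ) ≤ g * H ^ 3 := by positivity
  have hQ2 : 4 * g * H ^ 3 < Q ^ 2 := by
    nlinarith [Real.sq_sqrt hgH, Real.sqrt_nonneg (g * H ^ 3)]
  set A := Q ^ 2 + 2 * g * (h₂ ^ 2 - h₁ ^ 2) * (h₂ - h₁) with hAdef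
  have hApos : 0 < A := by
    rw [hAdef]
    nlinarith [mul_nonneg (mul_nonneg hg.le (add_pos h2pos h1pos).le) (sq_nonneg (h₂ - h₁)),
      pow_pos hQpos 2]
  set S := Real.sqrt A with hSdef
  have hS0 : 0 ≤ S := Real.sqrt_nonneg A
  have hS2 : S ^ 2 = A := Real.sq_sqrt hApos.le
  have hS2' : h₁ ^ 2 * h₂ ^ 2 * S ^ 2 = h₁ ^ 2 * h₂ ^ 2 * A := by rw [hS2]
  have hS2'' : h₁ ^ 2 * S ^ 2 = h₁ ^ 2 * A := by rw [hS2]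
  clear_value A S
  subst hAdef
  clear hSdef
  have hD : h₂ ^ 2 - h₁ ^ 2 ≠ 0 := by
    intro h
    have h' : (h₂ - h₁) * (h₂ + h₁) = 0 := by ring_nf; linarith
    rcases mul_eq_zero.mp h' with h'' | h''
    · exact hne (by linarith)
    · linarith
  have hQ₁D : Q₁ * (h₂ ^ 2 - h₁ ^ 2) = -(Q * h₁ ^ 2) + h₁ * h₂ * S := by
    rw [hQ₁]; field_simp
  have key : (Q - Q₁) ^ 2 * h₁ ^ 2 = h₂ ^ 2 * Q₁ ^ 2 + 2 * g * h₁ ^ 2 * h₂ ^ 2 * (h₁ - h₂) := by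
    have h0 : ((Q - Q₁) ^ 2 * h₁ ^ 2 - (h₂ ^ 2 * Q₁ ^ 2 + 2 * g * h₁ ^ 2 * h₂ ^ 2 * (h₁ - h₂)))
        * (h₂ ^ 2 - h₁ ^ 2) ^ 2 = 0 := by
      linear_combination (-(h₂ ^ 2 - h₁ ^ 2) * (Q₁ * (h₂ ^ 2 - h₁ ^ 2) +
        (-(Q * h₁ ^ 2) + h₁ * h₂ * S) + 2 * Q * h₁ ^ 2)) * hQ₁D +
        (-(h₁ ^ 2 * h₂ ^ 2 * (h₂ ^ 2 - h₁ ^ 2))) * hS2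
    have := (mul_eq_zero.mp h0).resolve_right (pow_ne_zero 2 hD)
    linarith [sub_eq_zero.mp this]
  have hQQ₁D : (Q - Q₁) * (h₂ ^ 2 - h₁ ^ 2) = h₂ * (Q * h₂ - h₁ * S) := by
    linear_combination -hQ₁D
  have hQ₁nonneg : 0 ≤ Q₁ := by
    rcases lt_or_gt_of_ne hne with h12 | h12
    · -- h₁ < h₂
      have hDpos : 0 < h₂ ^ 2 - h₁ ^ 2 := by nlinarith
      have t1 : 0 ≤ Q ^ 2 * h₁ ^ 2 * (h₂ ^ 2 - h₁ ^ 2) := by nlinarith [sq_nonneg Q, sq_nonneg h₁, mul_nonneg (sq_nonneg Q) (sq_nonneg h₁)]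
      have t2 : 0 ≤ 2 * g * h₁ ^ 2 * h₂ ^ 2 * (h₂ + h₁) * (h₂ - h₁) ^ 2 := by positivity
      have hsq : (Q * h₁ ^ 2) ^ 2 ≤ (h₁ * h₂ * S) ^ 2 := by nlinarith [hS2', t1, t2]
      have hnum : Q * h₁ ^ 2 ≤ h₁ * h₂ * S :=
        le_of_pow_le_pow_left₀ two_ne_zero (by positivity) hsq
      rw [hQ₁]; apply div_nonneg (by linarith) hDpos.le
    · -- h₂ < h₁
      have hDneg : h₂ ^ 2 - h₁ ^ 2 < 0 := by nlinarith
      have hb : h₂ * h₂ * (h₁ - h₂) ≤ H * H * H :=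
        mul_le_mul (mul_le_mul h2le h2le h2pos.le hH.le) (by linarith) (by linarith)
          (by positivity)
      have hb' := mul_le_mul_of_nonneg_left hb hg.le
      have hstep : 2 * g * h₂ ^ 2 * (h₁ - h₂) < Q ^ 2 := by nlinarith [hb', hQ2, hgH]
      have hmain := mul_le_mul_of_nonneg_right hstep.le
        (mul_nonneg (mul_nonneg (by linarith) (by positivity)) (by positivity) : (0:ℝ) ≤ (h₁ - h₂) * (h₁ + h₂) * h₁ ^ 2)
      have hsq : (h₁ * h₂ * S) ^ 2 ≤ (Q * h₁ ^ 2) ^ 2 := by nlinarith [hS2', hmain]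
      have hnum : h₁ * h₂ * S ≤ Q * h₁ ^ 2 :=
        le_of_pow_le_pow_left₀ two_ne_zero (by positivity) hsq
      rw [hQ₁, ← neg_div_neg_eq]
      exact div_nonneg (by linarith) (by linarith)
  have hQ₁leQ : Q₁ ≤ Q := by
    rcases lt_or_gt_of_ne hne with h12 | h12
    · -- h₁ < h₂
      have hDpos : 0 < h₂ ^ 2 - h₁ ^ 2 := by nlinarith
      have hb : h₁ * h₁ * (h₂ - h₁) ≤ H * H * H :=
        mul_le_mul (mul_le_mul h1le h1le h1pos.le hH.le) (by linarith) (by linarith)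
          (by positivity)
      have hb' := mul_le_mul_of_nonneg_left hb hg.le
      have hstep : 2 * g * h₁ ^ 2 * (h₂ - h₁) < Q ^ 2 := by nlinarith [hb', hQ2, hgH]
      have hmain := mul_le_mul_of_nonneg_right hstep.le
        (mul_nonneg (by linarith) (by positivity) : (0:ℝ) ≤ (h₂ - h₁) * (h₂ + h₁))
      have hsq : (h₁ * S) ^ 2 ≤ (Q * h₂) ^ 2 := by nlinarith [hS2'', hmain]
      have hnum : h₁ * S ≤ Q * h₂ :=
        le_of_pow_le_pow_left₀ two_ne_zero (by positivity) hsq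
      nlinarith [hQQ₁D, mul_nonneg h2pos.le (show (0:ℝ) ≤ Q * h₂ - h₁ * S by linarith), hDpos]
    · -- h₂ < h₁
      have hDneg : h₂ ^ 2 - h₁ ^ 2 < 0 := by nlinarith
      have t1 : 0 ≤ Q ^ 2 * (h₁ ^ 2 - h₂ ^ 2) := mul_nonneg (sq_nonneg Q) (by nlinarith)
      have t2 : 0 ≤ 2 * g * h₁ ^ 2 * (h₂ + h₁) * (h₂ - h₁) ^ 2 := by positivity
      have hsq : (Q * h₂) ^ 2 ≤ (h₁ * S) ^ 2 := by nlinarith [hS2'', t1, t2]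
      have hnum : Q * h₂ ≤ h₁ * S :=
        le_of_pow_le_pow_left₀ two_ne_zero (by positivity) hsq
      nlinarith [hQQ₁D, mul_nonpos_of_nonneg_of_nonpos h2pos.le
        (show Q * h₂ - h₁ * S ≤ 0 by linarith), hDneg]
  have hlam1 : 2 * lam - 2 * g * h₁ = (Q₁ / h₁) ^ 2 := by
    rw [hlam]; field_simp; ring
  have hlam2 : 2 * lam - 2 * g * h₂ = ((Q - Q₁) / h₂) ^ 2 := by
    rw [hlam]; field_simp
    linear_combination (-1:ℝ) * key
  refine ⟨hQ₁nonneg, hQ₁leQ, ?_, ?_, ?_⟩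
  · rcases le_total h₁ h₂ with hle | hle
    · rw [max_eq_right hle]
      linarith [sq_nonneg ((Q - Q₁) / h₂), hlam2]
    · rw [max_eq_left hle]
      linarith [sq_nonneg (Q₁ / h₁), hlam1]
  · rw [hlam1, Real.sqrt_sq (div_nonneg hQ₁nonneg h1pos.le)]
    field_simp
  · rw [hlam2, Real.sqrt_sq (div_nonneg (by linarith) h2pos.le)]
    field_simp
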